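/- Let Δ be a Jordan derivation of R = R_n(K,J) (n ≥ 4, K 2-torsion free) whose matrices Δ(e_{i+1,i}) have zero i-th columns and zero (i+1,1) entries. Then for 1 < i < n and x ∈ K, Δ(x e_{i,1}) = Δ^{i,1}_{i,1}(x) e_{i,1} + Δ^{i,1}_{n,1}(x) e_{n,1}, i.e., Δ(x e_{i,1}) is supported on positions (i,1) and (n,1). -/

import Mathlib

open Matrix

/-- `R_n(K,J)`: the non-unital subring of `n × n` matrices over `K` whose entries on and
above the main diagonal lie in the two-sided ideal `J`. -/
def Rset (n : ℕ) (K : Type) [Ring K] (J : TwoSidedIdeal K) :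
    NonUnitalSubring (Matrix (Fin n) (Fin n) K) where
  carrier := {M | ∀ i j : Fin n, i ≤ j → M i j ∈ J}
  zero_mem' := by intro i j _; simp [J.zero_mem]
  add_mem' := by intro a b ha hb i j h; exact J.add_mem (ha i j h) (hb i j h)
  neg_mem' := by intro a ha i j h; exact J.neg_mem (ha i j h)
  mul_mem' := by
    intro a b ha hb i j h
    show (∑ k, a i k * b k j) ∈ J
    refine J.finsetSum_mem _ _ fun k _ => ?_
    rcases le_or_gt i k with hik | hik
    · exact J.mul_mem_right _ _ (ha i k hik)
    · exact J.mul_mem_left _ _ (hb k j (le_trans hik.le h))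

lemma stdBasis_mem {n : ℕ} {K : Type} [Ring K] {J : TwoSidedIdeal K}
    {i j : Fin n} {y : K} (h : i ≤ j → y ∈ J) :
    Matrix.single i j y ∈ Rset n K J := by
  intro a b hab
  rw [Matrix.single]
  by_cases hc : i = a ∧ j = b
  · obtain ⟨rfl, rfl⟩ := hc
    simpa using h hab
  · simp [Matrix.of_apply, if_neg hc, J.zero_mem]

lemma stdBasis_mem_lower {n : ℕ} {K : Type} [Ring K] {J : TwoSidedIdeal K}
    {i j : Fin n} (h : j < i) (y : K) :
    Matrix.single i j y ∈ Rset n K J :=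
  stdBasis_mem fun hle => absurd hle (not_le.mpr h)

section Aux

variable {n : ℕ} {K : Type} [Ring K] {J : TwoSidedIdeal K}

/-- the element `x e_{p,q}` of the subring, `q < p`. -/
def EL (p q : Fin n) (h : q < p) (x : K) : ↥(Rset n K J) :=
  ⟨Matrix.single p q x, stdBasis_mem_lower h x⟩

@[simp] lemma EL_val (p q : Fin n) (h : q < p) (x : K) :
    ((EL (J := J) p q h x : ↥(Rset n K J)) : Matrix (Fin n) (Fin n) K)
      = Matrix.single p q x := rfl

lemma mul_std_apply (M : Matrix (Fin n) (Fin n) K) (p q s t : Fin n) (c : K) :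
    (M * Matrix.single p q c) s t = if t = q then M s p * c else 0 := by
  by_cases h : t = q
  · subst h; simp
  · simp [h]

lemma std_mul_apply (M : Matrix (Fin n) (Fin n) K) (p q s t : Fin n) (c : K) :
    (Matrix.single p q c * M) s t = if s = p then c * M q t else 0 := by
  by_cases h : s = p
  · subst h; simp
  · simp [h]

variable (Δ : ↥(Rset n K J) → ↥(Rset n K J))

lemma delta_zero (hadd : ∀ a b : ↥(Rset n K J), Δ (a + b) = Δ a + Δ b) :
    Δ 0 = 0 := by
  have h := hadd 0 0
  rw [add_zero] at h
  have h2 : Δ 0 + Δ 0 = Δ 0 + 0 := by rw [add_zero]; exact h.symm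
  exact add_left_cancel h2

end Aux

section Core

variable {n : ℕ} {K : Type} [Ring K] {J : TwoSidedIdeal K}
variable (Δ : ↥(Rset n K J) → ↥(Rset n K J))
variable (hadd : ∀ a b : ↥(Rset n K J), Δ (a + b) = Δ a + Δ b)
variable (hjord : ∀ a b : ↥(Rset n K J),
      Δ (a * b + b * a) = Δ a * b + b * Δ a + a * Δ b + Δ b * a)

include hadd hjord

/-- Jordan relation for a pair with vanishing Jordan product:
`A = x e_{u,v}`, `B = e_{p,q}` with `v ≠ p`, `q ≠ u`. -/
lemma rel_entry {u v p q : Fin n} (huv : v < u) (hpq : q < p)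
    (h1 : v ≠ p) (h2 : q ≠ u) (x : K) (s t : Fin n) :
    (if t = q then (↑(Δ (EL u v huv x)) : Matrix (Fin n) (Fin n) K) s p else 0) +
    (if s = p then (↑(Δ (EL u v huv x)) : Matrix (Fin n) (Fin n) K) q t else 0) +
    (if s = u then x * (↑(Δ (EL p q hpq 1)) : Matrix (Fin n) (Fin n) K) v t else 0) +
    (if t = v then (↑(Δ (EL p q hpq 1)) : Matrix (Fin n) (Fin n) K) s u * x else 0) = 0 := by
  have hz : EL (J := J) u v huv x * EL p q hpq 1 + EL p q hpq 1 * EL u v huv x = 0 := by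
    apply Subtype.ext
    show Matrix.single u v x * Matrix.single p q 1 +
      Matrix.single p q 1 * Matrix.single u v x = 0
    rw [Matrix.single_mul_single_of_ne (h := h1), Matrix.single_mul_single_of_ne (h := h2), add_zero]
  have h := hjord (EL u v huv x) (EL p q hpq 1)
  rw [hz, delta_zero Δ hadd] at h
  have h' := congrArg (fun z : ↥(Rset n K J) => (↑z : Matrix (Fin n) (Fin n) K) s t) h.symm
  simp only [ZeroMemClass.coe_zero, MulMemClass.coe_mul, AddMemClass.coe_add,
    Matrix.add_apply, Matrix.zero_apply, EL_val, mul_std_apply, std_mul_apply,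
    mul_one, one_mul] at h'
  exact h'

/-- Jordan relation computing `Δ(x e_{p,m})` from `A = x e_{q,m}`, `B = e_{p,q}`, `m < q < p`. -/
lemma prod_entry {p q m : Fin n} (hpq : q < p) (hqm : m < q) (x : K) (s t : Fin n) :
    (↑(Δ (EL p m (hqm.trans hpq) x)) : Matrix (Fin n) (Fin n) K) s t =
    (if t = q then (↑(Δ (EL q m hqm x)) : Matrix (Fin n) (Fin n) K) s p else 0) +
    (if s = p then (↑(Δ (EL q m hqm x)) : Matrix (Fin n) (Fin n) K) q t else 0) +
    (if s = q then x * (↑(Δ (EL p q hpq 1)) : Matrix (Fin n) (Fin n) K) m t else 0) +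
    (if t = m then (↑(Δ (EL p q hpq 1)) : Matrix (Fin n) (Fin n) K) s q * x else 0) := by
  have hel : EL (J := J) q m hqm x * EL p q hpq 1 + EL p q hpq 1 * EL q m hqm x
      = EL p m (hqm.trans hpq) x := by
    apply Subtype.ext
    show Matrix.single q m x * Matrix.single p q 1 +
      Matrix.single p q 1 * Matrix.single q m x
      = Matrix.single p m x
    rw [Matrix.single_mul_single_of_ne (h := (hqm.trans hpq).ne), Matrix.single_mul_single_same,
      zero_add, one_mul]
  have h := hjord (EL q m hqm x) (EL p q hpq 1)
  rw [hel] at h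
  have h' := congrArg (fun z : ↥(Rset n K J) => (↑z : Matrix (Fin n) (Fin n) K) s t) h
  simp only [MulMemClass.coe_mul, AddMemClass.coe_add,
    Matrix.add_apply, EL_val, mul_std_apply, std_mul_apply, mul_one, one_mul] at h'
  exact h'

/-- consequence of `b² = 0` for `b = e_{p,q}`. -/
lemma sq_entry (htf : ∀ a : K, a + a = 0 → a = 0) {p q : Fin n} (hpq : q < p) (s t : Fin n) :
    (if t = q then (↑(Δ (EL p q hpq 1)) : Matrix (Fin n) (Fin n) K) s p else 0) +
    (if s = p then (↑(Δ (EL p q hpq 1)) : Matrix (Fin n) (Fin n) K) q t else 0) = 0 := by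
  have hz : EL (J := J) p q hpq 1 * EL p q hpq 1 + EL p q hpq 1 * EL p q hpq 1 = 0 := by
    apply Subtype.ext
    show Matrix.single p q 1 * Matrix.single p q 1 +
      Matrix.single p q 1 * Matrix.single p q 1 = 0
    rw [Matrix.single_mul_single_of_ne (h := hpq.ne), add_zero]
  have h := hjord (EL p q hpq 1) (EL p q hpq 1)
  rw [hz, delta_zero Δ hadd] at h
  have h' := congrArg (fun z : ↥(Rset n K J) => (↑z : Matrix (Fin n) (Fin n) K) s t) h.symm
  simp only [ZeroMemClass.coe_zero, MulMemClass.coe_mul, AddMemClass.coe_add,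
    Matrix.add_apply, Matrix.zero_apply, EL_val, mul_std_apply, std_mul_apply,
    mul_one, one_mul] at h'
  set A := (if t = q then (↑(Δ (EL (J := J) p q hpq 1)) : Matrix (Fin n) (Fin n) K) s p else 0) with hA
  set B := (if s = p then (↑(Δ (EL (J := J) p q hpq 1)) : Matrix (Fin n) (Fin n) K) q t else 0) with hB
  have h2 : (A + B) + (A + B) = 0 := by
    rw [show (A + B) + (A + B) = A + B + B + A by abel]
    exact h'
  exact htf _ h2

end Core

set_option linter.unusedSectionVars false


lemma mk_ne' {n b : ℕ} {t : Fin n} {hb : b < n} (h : b ≠ (t : ℕ)) :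
    (⟨b, hb⟩ : Fin n) ≠ t := fun he => h (congrArg Fin.val he)

lemma ne_mk' {n b : ℕ} {t : Fin n} {hb : b < n} (h : (t : ℕ) ≠ b) :
    t ≠ (⟨b, hb⟩ : Fin n) := fun he => h (congrArg Fin.val he)

lemma mk_ne_mk {n a b : ℕ} {ha : a < n} {hb : b < n} (h : a ≠ b) :
    (⟨a, ha⟩ : Fin n) ≠ ⟨b, hb⟩ := fun he => h (congrArg Fin.val he)

section Main

variable {n : ℕ} (hn : 4 ≤ n) {K : Type} [Ring K]
    (htf : ∀ a : K, a + a = 0 → a = 0) {J : TwoSidedIdeal K}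
    (Δ : ↥(Rset n K J) → ↥(Rset n K J))
    (hadd : ∀ a b : ↥(Rset n K J), Δ (a + b) = Δ a + Δ b)
    (hjord : ∀ a b : ↥(Rset n K J),
      Δ (a * b + b * a) = Δ a * b + b * Δ a + a * Δ b + Δ b * a)
    (hcol : ∀ (c : Fin n) (hc : (c : ℕ) + 1 < n), ∀ s : Fin n,
      (↑(Δ ⟨Matrix.single (⟨(c : ℕ) + 1, hc⟩ : Fin n) c (1 : K),
          stdBasis_mem_lower (Fin.lt_def.mpr (Nat.lt_succ_self _)) 1⟩) :
        Matrix (Fin n) (Fin n) K) s c = 0)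

include hn htf hadd hjord hcol

/-- column vanishing of `Δ e_{c+1,c}` in `EL` form -/
lemma hcol' (c : ℕ) (hc : c + 1 < n) (hlt : (⟨c, by omega⟩ : Fin n) < ⟨c + 1, hc⟩)
    (s : Fin n) :
    (↑(Δ (EL (⟨c + 1, hc⟩ : Fin n) ⟨c, by omega⟩ hlt 1)) : Matrix (Fin n) (Fin n) K)
      s ⟨c, by omega⟩ = 0 :=
  hcol ⟨c, by omega⟩ hc s


lemma key_base :
    ∀ (x : K) (s t : Fin n), ¬((s : ℕ) = 1 ∧ (t : ℕ) = 0) →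
      ¬((s : ℕ) = n - 1 ∧ (t : ℕ) = 0) →
      (↑(Δ (EL (⟨1, by omega⟩ : Fin n) ⟨0, by omega⟩
        (Fin.mk_lt_mk.mpr (by omega)) x)) : Matrix (Fin n) (Fin n) K) s t = 0 := by
  intro x s t hg1 hg2
  have h0n : 0 < n := by omega
  have h1n : 1 < n := by omega
  have h2n : 2 < n := by omega
  have h3n : 3 < n := by omega
  set i0 : Fin n := ⟨0, h0n⟩ with hi0def
  set i1 : Fin n := ⟨1, h1n⟩ with hi1def
  set i2 : Fin n := ⟨2, h2n⟩ with hi2def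
  set i3 : Fin n := ⟨3, h3n⟩ with hi3def
  have h01 : i0 < i1 := Fin.mk_lt_mk.mpr (by omega)
  have h02 : i0 < i2 := Fin.mk_lt_mk.mpr (by omega)
  have h03 : i0 < i3 := Fin.mk_lt_mk.mpr (by omega)
  have h12 : i1 < i2 := Fin.mk_lt_mk.mpr (by omega)
  have h13 : i1 < i3 := Fin.mk_lt_mk.mpr (by omega)
  have h23 : i2 < i3 := Fin.mk_lt_mk.mpr (by omega)
  have hne01 : i0 ≠ i1 := mk_ne_mk (by omega)
  have hne02 : i0 ≠ i2 := mk_ne_mk (by omega)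
  have hne03 : i0 ≠ i3 := mk_ne_mk (by omega)
  have hne10 : i1 ≠ i0 := mk_ne_mk (by omega)
  have hne12 : i1 ≠ i2 := mk_ne_mk (by omega)
  have hne20 : i2 ≠ i0 := mk_ne_mk (by omega)
  have hne21 : i2 ≠ i1 := mk_ne_mk (by omega)
  have hne31 : i3 ≠ i1 := mk_ne_mk (by omega)
  have hne32 : i3 ≠ i2 := mk_ne_mk (by omega)
  set M : Matrix (Fin n) (Fin n) K := (↑(Δ (EL i1 i0 h01 x)) : Matrix (Fin n) (Fin n) K) with hMdef
  set D0 : Matrix (Fin n) (Fin n) K := (↑(Δ (EL i1 i0 h01 1)) : Matrix (Fin n) (Fin n) K) with hD0def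
  set D1 : Matrix (Fin n) (Fin n) K := (↑(Δ (EL i2 i1 h12 1)) : Matrix (Fin n) (Fin n) K) with hD1def
  set A : Matrix (Fin n) (Fin n) K := (↑(Δ (EL i2 i0 h02 x)) : Matrix (Fin n) (Fin n) K) with hAdef
  set N : Matrix (Fin n) (Fin n) K := (↑(Δ (EL i2 i0 h02 1)) : Matrix (Fin n) (Fin n) K) with hNdef
  -- hcol instances
  have hcol0 : ∀ s' : Fin n, D0 s' i0 = 0 := fun s' =>
    hcol' hn htf Δ hadd hjord hcol 0 h1n h01 s'
  have hcol1 : ∀ s' : Fin n, D1 s' i1 = 0 := fun s' =>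
    hcol' hn htf Δ hadd hjord hcol 1 h2n h12 s'
  -- (1) column 1 of D0 vanishes
  have hD01 : ∀ s' : Fin n, D0 s' i1 = 0 := by
    intro s'
    have h := sq_entry Δ hadd hjord htf h01 s' i0
    simp only [← hD0def, if_true, hcol0, ite_self, add_zero] at h
    exact h
  -- (2) column 1 of M off (1,1), and M₁₁ + M₀₀ = 0
  have hMcol1 : ∀ s' : Fin n, s' ≠ i1 → M s' i1 = 0 := by
    intro s' hs
    have h := rel_entry Δ hadd hjord h01 h01 hne01 hne01 x s' i0
    simp only [← hMdef, ← hD0def, if_true, if_neg hs, hD01, zero_mul, add_zero] at h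
    exact h
  have hM11p : M i1 i1 + M i0 i0 = 0 := by
    have h := rel_entry Δ hadd hjord h01 h01 hne01 hne01 x i1 i0
    simp only [← hMdef, ← hD0def, if_true, hcol0, hD01, mul_zero, zero_mul, add_zero] at h
    exact h
  -- (3) entries of A = Δ(x e₂₀)
  have hA : ∀ s' t' : Fin n, A s' t' =
      (if t' = i1 then M s' i2 else 0) + (if s' = i2 then M i1 t' else 0) +
      (if s' = i1 then x * D1 i0 t' else 0) + (if t' = i0 then D1 s' i1 * x else 0) :=
    fun s' t' => prod_entry Δ hadd hjord h12 h01 x s' t'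
  -- (4) M₁₂ = 0
  have hA22 : A i2 i2 = M i1 i2 := by
    rw [hA]
    simp only [if_neg hne21, if_true, if_neg hne20, zero_add, add_zero]
  have hA11 : A i1 i1 = M i1 i2 := by
    rw [hA]
    simp only [if_true, if_neg hne12, if_neg hne10, hcol1, mul_zero, add_zero]
  have hM12 : M i1 i2 = 0 := by
    have h := rel_entry Δ hadd hjord h02 h12 hne02 hne12 x i2 i1
    simp only [← hAdef, ← hD1def, if_true, if_neg hne10, hcol1, mul_zero, add_zero] at h
    rw [hA22, hA11] at h
    exact htf _ h
  -- (5) entries of N = Δ(e₂₀)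
  have hN : ∀ s' t' : Fin n, N s' t' =
      (if t' = i1 then D0 s' i2 else 0) + (if s' = i2 then D0 i1 t' else 0) +
      (if s' = i1 then 1 * D1 i0 t' else 0) + (if t' = i0 then D1 s' i1 * 1 else 0) :=
    fun s' t' => prod_entry Δ hadd hjord h12 h01 1 s' t'
  have hNs1 : ∀ s' : Fin n, s' ≠ i1 → s' ≠ i2 → N s' i1 = D0 s' i2 := by
    intro s' hs1 hs2
    rw [hN]
    simp only [if_true, if_neg hs1, if_neg hs2, if_neg hne10, add_zero, zero_add]
  -- (6) column 2 of D0 off rows 1,2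
  have hD0c2 : ∀ s' : Fin n, s' ≠ i1 → s' ≠ i2 → D0 s' i2 = 0 := by
    intro s' hs1 hs2
    have h := rel_entry Δ hadd hjord h01 h02 hne02 hne01 (1 : K) s' i0
    simp only [← hD0def, ← hNdef, if_true, if_neg hs1, if_neg hs2, mul_one,
      add_zero, zero_add] at h
    rw [hNs1 s' hs1 hs2] at h
    exact htf _ h
  -- (7) column 2 of M off rows 1,2
  have hMcol2 : ∀ s' : Fin n, s' ≠ i1 → s' ≠ i2 → M s' i2 = 0 := by
    intro s' hs1 hs2
    have h := rel_entry Δ hadd hjord h01 h02 hne02 hne01 x s' i0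
    simp only [← hMdef, ← hNdef, if_true, if_neg hs1, if_neg hs2, add_zero, zero_add] at h
    rw [hNs1 s' hs1 hs2, hD0c2 s' hs1 hs2, zero_mul, add_zero] at h
    exact h
  -- (8) M₂₂ + M₀₀ + D0₂₂ x = 0
  have hN21 : N i2 i1 = D0 i2 i2 := by
    rw [hN]
    simp only [if_true, if_neg hne21, if_neg hne10, hD01, add_zero]
  have hdag2 : M i2 i2 + M i0 i0 + D0 i2 i2 * x = 0 := by
    have h := rel_entry Δ hadd hjord h01 h02 hne02 hne01 x i2 i0
    simp only [← hMdef, ← hNdef, if_true, if_neg hne21, add_zero, zero_add] at h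
    rw [hN21] at h
    exact h
  -- (9) M₂₂ + M₁₁ + D0₂₂ x = 0
  have hA21 : A i2 i1 = M i2 i2 + M i1 i1 := by
    rw [hA]
    simp only [if_true, if_neg hne21, if_neg hne10, add_zero]
  have h9 : M i2 i2 + M i1 i1 + D0 i2 i2 * x = 0 := by
    have h := rel_entry Δ hadd hjord h02 h01 hne01 hne02 x i2 i0
    simp only [← hAdef, ← hD0def, if_true, if_neg hne21, hcol0, mul_zero,
      add_zero, zero_add] at h
    rw [hA21] at h
    exact h
  -- (10) M₀₀ = M₁₁ = 0
  have h10 : M i1 i1 = M i0 i0 := by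
    have hx := h9.trans hdag2.symm
    exact add_left_cancel (add_right_cancel hx)
  have hM00 : M i0 i0 = 0 := by
    rw [h10] at hM11p
    exact htf _ hM11p
  have hM11 : M i1 i1 = 0 := by rw [h10]; exact hM00
  -- (11) M₂₂ = 0
  have e1 : (↑(Δ (EL i3 i0 h03 x)) : Matrix (Fin n) (Fin n) K) i3 i1
      = M i3 i3 + M i1 i1 := by
    have h := prod_entry Δ hadd hjord h13 h01 x i3 i1
    simp only [← hMdef, if_true, if_neg hne31, if_neg hne10, add_zero] at h
    exact h
  have e2 : (↑(Δ (EL i3 i0 h03 x)) : Matrix (Fin n) (Fin n) K) i3 i1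
      = M i2 i2 + M i1 i1 := by
    have h := prod_entry Δ hadd hjord h23 h02 x i3 i1
    simp only [← hAdef, if_true, if_neg hne12, if_neg hne32, if_neg hne10,
      zero_add, add_zero] at h
    rw [hA21] at h
    exact h
  have h33 : M i3 i3 = M i2 i2 := add_right_cancel (e1.symm.trans e2)
  have hM22 : M i2 i2 = 0 := by
    have h := rel_entry Δ hadd hjord h01 h23 hne03 hne21 x i3 i2
    simp only [← hMdef, if_true, if_neg hne31, if_neg hne20, add_zero] at h
    rw [h33] at h
    exact htf _ h
  -- (13) columns ≥ 3, rows ≠ 1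
  have hcolt : ∀ t' : Fin n, 3 ≤ (t' : ℕ) → ∀ s' : Fin n, s' ≠ i1 → M s' t' = 0 := by
    intro t' ht3 s' hs
    have h2t : i2 < t' := Fin.lt_def.mpr (by omega : 2 < (t' : ℕ))
    have hne0t : i0 ≠ t' := mk_ne' (by omega)
    have h := rel_entry Δ hadd hjord h01 h2t hne0t hne21 x s' i2
    simp only [← hMdef, if_true, if_neg hs, if_neg hne20, hM22, ite_self,
      add_zero] at h
    exact h
  -- (14) row 1, columns ≥ 3
  have hrow1 : ∀ t' : Fin n, 3 ≤ (t' : ℕ) → M i1 t' = 0 := by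
    intro t' ht3
    have hlt := t'.isLt
    obtain ⟨m, hm⟩ : ∃ m, (t' : ℕ) = m + 1 := ⟨(t' : ℕ) - 1, by omega⟩
    have hmn : m < n := by omega
    have hm1n : m + 1 < n := by omega
    have ht'eq : t' = ⟨m + 1, hm1n⟩ := Fin.ext hm
    have hcm : (⟨m, hmn⟩ : Fin n) < ⟨m + 1, hm1n⟩ := Fin.mk_lt_mk.mpr (by omega)
    have hDc : ∀ s' : Fin n,
        (↑(Δ (EL (⟨m + 1, hm1n⟩ : Fin n) ⟨m, hmn⟩ hcm 1)) : Matrix (Fin n) (Fin n) K)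
          s' ⟨m, hmn⟩ = 0 := fun s' => hcol' hn htf Δ hadd hjord hcol m hm1n hcm s'
    have h := rel_entry Δ hadd hjord h01 hcm (mk_ne_mk (by omega))
      (mk_ne_mk (by omega)) x i1 ⟨m, hmn⟩
    simp only [← hMdef, if_true,
      if_neg (show i1 ≠ (⟨m + 1, hm1n⟩ : Fin n) from mk_ne_mk (by omega)),
      if_neg (show (⟨m, hmn⟩ : Fin n) ≠ i0 from mk_ne_mk (by omega)),
      hDc, mul_zero, add_zero, zero_add] at h
    rw [ht'eq]
    exact h
  -- (15) column 0, rows 2..n-2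
  have hcol0fam : ∀ s' : Fin n, 2 ≤ (s' : ℕ) → (s' : ℕ) ≤ n - 2 → M s' i0 = 0 := by
    intro s' h2s hs2
    have hspn : (s' : ℕ) + 1 < n := by omega
    have hsps : s' < (⟨(s' : ℕ) + 1, hspn⟩ : Fin n) := Fin.lt_def.mpr (by omega : (s' : ℕ) < (s' : ℕ) + 1)
    have hDcolS : ∀ u' : Fin n,
        (↑(Δ (EL (⟨(s' : ℕ) + 1, hspn⟩ : Fin n) s' hsps 1)) : Matrix (Fin n) (Fin n) K)
          u' s' = 0 := fun u' => hcol' hn htf Δ hadd hjord hcol (s' : ℕ) hspn hsps u'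
    have hD : (↑(Δ (EL (⟨(s' : ℕ) + 1, hspn⟩ : Fin n) s' hsps 1)) : Matrix (Fin n) (Fin n) K)
        (⟨(s' : ℕ) + 1, hspn⟩ : Fin n) i1 = 0 := by
      have h := rel_entry Δ hadd hjord hsps h01 (ne_mk' (by omega))
        (mk_ne_mk (by omega)) (1 : K) (⟨(s' : ℕ) + 1, hspn⟩ : Fin n) i0
      simp only [← hD0def, if_true,
        if_neg (show (⟨(s' : ℕ) + 1, hspn⟩ : Fin n) ≠ i1 from mk_ne_mk (by omega)),
        if_neg (show i0 ≠ s' from mk_ne' (by omega)),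
        hcol0, mul_zero, add_zero, zero_add] at h
      exact h
    have h := rel_entry Δ hadd hjord h01 hsps (mk_ne_mk (by omega))
      (ne_mk' (by omega)) x (⟨(s' : ℕ) + 1, hspn⟩ : Fin n) i0
    simp only [← hMdef, if_true,
      if_neg (show i0 ≠ s' from mk_ne' (by omega)),
      if_neg (show (⟨(s' : ℕ) + 1, hspn⟩ : Fin n) ≠ i1 from mk_ne_mk (by omega)),
      hD, zero_mul, add_zero, zero_add] at h
    exact h
  -- final assembly
  have main : M s t = 0 := by
    by_cases ht0 : (t : ℕ) = 0
    · rw [show t = i0 from Fin.ext ht0]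
      have hs1 : (s : ℕ) ≠ 1 := fun h => hg1 ⟨h, ht0⟩
      have hsn : (s : ℕ) ≠ n - 1 := fun h => hg2 ⟨h, ht0⟩
      by_cases hs0 : (s : ℕ) = 0
      · rw [show s = i0 from Fin.ext hs0]
        exact hM00
      · have hlt := s.isLt
        exact hcol0fam s (by omega) (by omega)
    · by_cases ht1 : (t : ℕ) = 1
      · rw [show t = i1 from Fin.ext ht1]
        by_cases hs1 : s = i1
        · rw [hs1]; exact hM11
        · exact hMcol1 s hs1
      · by_cases ht2 : (t : ℕ) = 2
        · rw [show t = i2 from Fin.ext ht2]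
          by_cases hs1 : s = i1
          · rw [hs1]; exact hM12
          · by_cases hs2 : s = i2
            · rw [hs2]; exact hM22
            · exact hMcol2 s hs1 hs2
        · have ht3 : 3 ≤ (t : ℕ) := by omega
          by_cases hs1 : s = i1
          · rw [hs1]; exact hrow1 t ht3
          · exact hcolt t ht3 s hs1
  exact main

lemma key_step (k : ℕ) (hk1 : 1 ≤ k) (hk2 : k + 1 ≤ n - 2)
    (IH : ∀ (x : K) (s t : Fin n), ¬((s : ℕ) = k ∧ (t : ℕ) = 0) →
      ¬((s : ℕ) = n - 1 ∧ (t : ℕ) = 0) →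
      (↑(Δ (EL (⟨k, by omega⟩ : Fin n) ⟨0, by omega⟩
        (Fin.mk_lt_mk.mpr (by omega)) x)) : Matrix (Fin n) (Fin n) K) s t = 0) :
    ∀ (x : K) (s t : Fin n), ¬((s : ℕ) = k + 1 ∧ (t : ℕ) = 0) →
      ¬((s : ℕ) = n - 1 ∧ (t : ℕ) = 0) →
      (↑(Δ (EL (⟨k + 1, by omega⟩ : Fin n) ⟨0, by omega⟩
        (Fin.mk_lt_mk.mpr (by omega)) x)) : Matrix (Fin n) (Fin n) K) s t = 0 := by
  intro x s t hg1 hg2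
  -- canonical indices
  have h0n : 0 < n := by omega
  have hrmn : k < n := by omega
  have hrn : k + 1 < n := by omega
  have hrpn : k + 2 < n := by omega
  set i0 : Fin n := ⟨0, h0n⟩ with hi0def
  set rm : Fin n := ⟨k, hrmn⟩ with hrmdef
  set r : Fin n := ⟨k + 1, hrn⟩ with hrdef
  set rp : Fin n := ⟨k + 2, hrpn⟩ with hrpdef
  have h0rm : i0 < rm := Fin.mk_lt_mk.mpr (by omega)
  have h0r : i0 < r := Fin.mk_lt_mk.mpr (by omega)
  have hrmr : rm < r := Fin.mk_lt_mk.mpr (by omega)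
  have hrmrp : rm < rp := Fin.mk_lt_mk.mpr (by omega)
  set M : Matrix (Fin n) (Fin n) K := (↑(Δ (EL r i0 h0r x)) : Matrix (Fin n) (Fin n) K) with hMdef
  set M' : Matrix (Fin n) (Fin n) K := (↑(Δ (EL rm i0 h0rm x)) : Matrix (Fin n) (Fin n) K) with hM'def
  set D : Matrix (Fin n) (Fin n) K := (↑(Δ (EL r rm hrmr 1)) : Matrix (Fin n) (Fin n) K) with hDdef
  -- basic inequalities between indices
  have hne_0rm : i0 ≠ rm := mk_ne_mk (by omega)
  have hne_0r : i0 ≠ r := mk_ne_mk (by omega)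
  have hne_0rp : i0 ≠ rp := mk_ne_mk (by omega)
  have hne_rmr : rm ≠ r := mk_ne_mk (by omega)
  have hne_rpr : rp ≠ r := mk_ne_mk (by omega)
  -- hcol instance
  have hDcol : ∀ s' : Fin n, D s' rm = 0 := fun s' =>
    hcol' hn htf Δ hadd hjord hcol k hrn hrmr s'
  -- D r r = 0
  have hDrr : D r r = 0 := by
    have h := sq_entry Δ hadd hjord htf hrmr r rm
    simp only [← hDdef, if_true, hDcol, add_zero] at h
    exact h
  -- main formula
  have hForm : ∀ s' t' : Fin n, M s' t' =
      (if t' = rm then M' s' r else 0) + (if s' = r then M' rm t' else 0) +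
      (if s' = rm then x * D i0 t' else 0) + (if t' = i0 then D s' rm * x else 0) :=
    fun s' t' => prod_entry Δ hadd hjord hrmr h0rm x s' t'
  -- IH instances
  have hM'col : ∀ s' : Fin n, M' s' r = 0 := fun s' =>
    IH x s' r (fun hc => Nat.succ_ne_zero k hc.2) (fun hc => Nat.succ_ne_zero k hc.2)
  have hM'row : ∀ t' : Fin n, (t' : ℕ) ≠ 0 → M' rm t' = 0 := fun t' h =>
    IH x rm t' (fun hc => h hc.2) (fun hc => h hc.2)
  -- x * D 0 0 = 0
  have hxd0 : x * D i0 i0 = 0 := by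
    have h := rel_entry Δ hadd hjord h0r hrmr hne_0r hne_rmr x r i0
    simp only [← hMdef, ← hDdef, if_true, if_neg hne_0rm, hDrr, zero_mul,
      add_zero, zero_add] at h
    have h2 : M rm i0 = x * D i0 i0 := by
      rw [hForm rm i0]
      simp only [if_true, if_neg hne_0rm, if_neg hne_rmr, hDcol, zero_mul,
        add_zero, zero_add]
    rw [h2] at h
    exact htf _ h
  -- x * D 0 t = 0 for t ∉ {0, k}
  have hxdt : ∀ t' : Fin n, (t' : ℕ) ≠ 0 → (t' : ℕ) ≠ k → x * D i0 t' = 0 := by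
    intro t' h0 hk
    have hne_t'rm : t' ≠ rm := fun h => hk (congrArg Fin.val h)
    have hne_t'0 : t' ≠ i0 := fun h => h0 (congrArg Fin.val h)
    have h := rel_entry Δ hadd hjord h0r hrmrp hne_0rp hne_rmr x rp t'
    simp only [← hMdef, if_true, if_neg hne_t'rm, if_neg hne_rpr, if_neg hne_t'0,
      add_zero, zero_add] at h
    have h2 : M rm t' = x * D i0 t' := by
      rw [hForm rm t']
      simp only [if_true, if_neg hne_t'rm, if_neg hne_rmr, if_neg hne_t'0, hDcol,
        zero_mul, add_zero, zero_add]
    rw [← h2, h]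
  -- final assembly
  have main : M s t = 0 := by
    rw [hForm s t]
    have e1 : (if t = rm then M' s r else 0) = 0 := by rw [hM'col s, ite_self]
    have e4 : (if t = i0 then D s rm * x else 0) = 0 := by
      rw [hDcol s, zero_mul, ite_self]
    have e2 : (if s = r then M' rm t else 0) = 0 := by
      by_cases hs : s = r
      · rw [if_pos hs]
        apply hM'row
        intro h0
        exact hg1 ⟨congrArg Fin.val hs, h0⟩
      · rw [if_neg hs]
    have e3 : (if s = rm then x * D i0 t else 0) = 0 := by
      by_cases hs : s = rm
      · rw [if_pos hs]
        by_cases ht : (t : ℕ) = 0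
        · rw [show t = i0 from Fin.ext ht]
          exact hxd0
        · by_cases htk : (t : ℕ) = k
          · rw [show t = rm from Fin.ext htk, hDcol i0, mul_zero]
          · exact hxdt t ht htk
      · rw [if_neg hs]
    rw [e1, e2, e3, e4]
    simp
  exact main

lemma key : ∀ (k : ℕ) (hk1 : 1 ≤ k) (hk2 : k ≤ n - 2) (x : K) (s t : Fin n),
    ¬((s : ℕ) = k ∧ (t : ℕ) = 0) → ¬((s : ℕ) = n - 1 ∧ (t : ℕ) = 0) →
    (↑(Δ (EL (⟨k, by omega⟩ : Fin n) ⟨0, by omega⟩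
      (Fin.mk_lt_mk.mpr (by omega)) x)) : Matrix (Fin n) (Fin n) K) s t = 0 := by
  intro k
  induction k with
  | zero => intro hk1; exact absurd hk1 (by omega)
  | succ m ih =>
    intro hk1 hk2 x s t h1 h2
    rcases Nat.eq_zero_or_pos m with hm | hm
    · subst hm
      exact key_base hn htf Δ hadd hjord hcol x s t h1 h2
    · exact key_step hn htf Δ hadd hjord hcol m hm hk2
        (fun x' s' t' h1' h2' => ih hm (by omega) x' s' t' h1' h2') x s t h1 h2

end Main

/-- under the column-vanishing hypotheses, `Δ(x e_{i,1})` is supported on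
positions `(i,1)` and `(n,1)` for `1 < i < n` (one-based); here `r` is the zero-based row. -/
theorem image_first_column (n : ℕ) (hn : 4 ≤ n) (K : Type) [Ring K]
    (htf : ∀ a : K, a + a = 0 → a = 0) (J : TwoSidedIdeal K)
    (Δ : ↥(Rset n K J) → ↥(Rset n K J))
    (hadd : ∀ a b : ↥(Rset n K J), Δ (a + b) = Δ a + Δ b)
    (hjord : ∀ a b : ↥(Rset n K J),
      Δ (a * b + b * a) = Δ a * b + b * Δ a + a * Δ b + Δ b * a)
    (hcol : ∀ (c : Fin n) (hc : (c : ℕ) + 1 < n), ∀ s : Fin n,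
      (↑(Δ ⟨Matrix.single (⟨(c : ℕ) + 1, hc⟩ : Fin n) c (1 : K),
          stdBasis_mem_lower (by simp only [Fin.lt_def]; omega) 1⟩) :
        Matrix (Fin n) (Fin n) K) s c = 0)
    (hent : ∀ (c : Fin n) (hc : (c : ℕ) + 1 < n),
      (↑(Δ ⟨Matrix.single (⟨(c : ℕ) + 1, hc⟩ : Fin n) c (1 : K),
          stdBasis_mem_lower (by simp only [Fin.lt_def]; omega) 1⟩) :
        Matrix (Fin n) (Fin n) K) (⟨(c : ℕ) + 1, hc⟩ : Fin n) ⟨0, by omega⟩ = 0) :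
    ∀ (r : Fin n) (hr1 : 0 < (r : ℕ)) (hr2 : (r : ℕ) < n - 1) (x : K),
      (↑(Δ ⟨Matrix.single r (⟨0, by omega⟩ : Fin n) x,
          stdBasis_mem_lower (by simp only [Fin.lt_def]; omega) x⟩) :
        Matrix (Fin n) (Fin n) K) =
      Matrix.single r (⟨0, by omega⟩ : Fin n)
        ((↑(Δ ⟨Matrix.single r (⟨0, by omega⟩ : Fin n) x,
            stdBasis_mem_lower (by simp only [Fin.lt_def]; omega) x⟩) :
          Matrix (Fin n) (Fin n) K) r ⟨0, by omega⟩) +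
      Matrix.single (⟨n - 1, by omega⟩ : Fin n) (⟨0, by omega⟩ : Fin n)
        ((↑(Δ ⟨Matrix.single r (⟨0, by omega⟩ : Fin n) x,
            stdBasis_mem_lower (by simp only [Fin.lt_def]; omega) x⟩) :
          Matrix (Fin n) (Fin n) K) ⟨n - 1, by omega⟩ ⟨0, by omega⟩) := by
  intro r hr1 hr2 x
  have hk := key hn htf Δ hadd hjord hcol (r : ℕ) (by omega) (by omega) x
  ext s t
  rw [Matrix.add_apply]
  by_cases hc1 : s = r ∧ (t : ℕ) = 0
  · obtain ⟨hs, ht⟩ := hc1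
    subst hs
    rw [show t = (⟨0, by omega⟩ : Fin n) from Fin.ext ht]
    rw [Matrix.single_apply_same,
      Matrix.single_apply_of_row_ne (mk_ne' (by omega)), add_zero]
  · by_cases hc2 : (s : ℕ) = n - 1 ∧ (t : ℕ) = 0
    · obtain ⟨hs, ht⟩ := hc2
      rw [show s = (⟨n - 1, by omega⟩ : Fin n) from Fin.ext hs,
        show t = (⟨0, by omega⟩ : Fin n) from Fin.ext ht]
      rw [Matrix.single_apply_same,
        Matrix.single_apply_of_row_ne (ne_mk' (by omega)), zero_add]
    · have hne1 : ¬(r = s ∧ (⟨0, by omega⟩ : Fin n) = t) :=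
        fun hc => hc1 ⟨hc.1.symm, (congrArg Fin.val hc.2).symm⟩
      have hne2 : ¬((⟨n - 1, by omega⟩ : Fin n) = s ∧ (⟨0, by omega⟩ : Fin n) = t) :=
        fun hc => hc2 ⟨(congrArg Fin.val hc.1).symm, (congrArg Fin.val hc.2).symm⟩
      rw [Matrix.single_apply_of_ne (h := hne1),
        Matrix.single_apply_of_ne (h := hne2), add_zero]
      exact hk s t (fun hc => hc1 ⟨Fin.ext hc.1, hc.2⟩) hc2
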